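/- Let c ≥ 1 and let H_1, H_2, H_3, H_4 be complement-connected graphs of the same order c such that for all l ≠ l' the graph H_l is not embeddable into H_{l'}. Define R_0 = {H_1, H_2, H_3, H_4}, and, inductively, for a nonempty set S of isomorphism types from R_{i−1} let G_{i,S} be the complement of the vertex-disjoint union of the graphs in S, and let R_i be the set of isomorphism types of the graphs G_{i,S} with |S| = |R_{i−1}|/2. Then: (1) for any S ⊆ R_{i−1} with |S| ≥ 2, the graph G_{i,S} is a connected inclusion-free uniform graph of rank i; (2) for any S, T ⊆ R_{i−1} with S not a subset of T, the graph G_{i,S} is not embeddable into G_{i,T}; and (3) |R_i| = C(|R_{i−1}|, |R_{i−1}|/2) (in particular each |R_i| is even, so the construction is well defined). -/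

import Mathlib

namespace PaperFO

variable {V : Type}

/-- The adjacency relation at decomposition depth `i`: distinct vertices
`x, y` lying in a common member `F` of the depth-`i` decomposition `Dec^i G`
are adjacent in `F` iff `{x,y} ∈^{i+1} E(G)`, i.e. iff `G.Adj x y ↔ Even i`. -/
def parityAdj (G : SimpleGraph V) (i : ℕ) (x y : V) : Prop :=
  x ≠ y ∧ (G.Adj x y ↔ Even i)

/-- `cellRel G i x y` says that `x` and `y` lie in the same member of the
depth-`i` decomposition `Dec^i G` of `G` (for a connected graph `G`); these
vertex sets are the cells of the partition `P_i` of the paper. -/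
def cellRel (G : SimpleGraph V) : ℕ → V → V → Prop
  | 0 => Relation.ReflTransGen (fun a b => parityAdj G 0 a b)
  | i + 1 => Relation.ReflTransGen (fun a b => cellRel G i a b ∧ parityAdj G (i + 1) a b)

/-- The member of `Dec^i G` containing the vertex `v`, as a graph: the
depth-`i` environment `env_i(v; G)` of `v`. -/
def envGraph (G : SimpleGraph V) (i : ℕ) (v : V) :
    SimpleGraph {u : V // cellRel G i v u} where
  Adj x y := parityAdj G i x.1 y.1
  symm := ⟨fun x y h => ⟨h.1.symm, (G.adj_comm y.1 x.1).trans h.2⟩⟩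
  loopless := ⟨fun x h => h.1 rfl⟩

/-- The rank of a connected graph `G`: the smallest `k` such that the
partition `P_{k+1}` coincides with `P_k` (equivalently, such that `P_k`
consists of the vertex sets of the cocomponents of `G`). -/
noncomputable def rank (G : SimpleGraph V) : ℕ :=
  sInf {k : ℕ | ∀ x y : V, cellRel G (k + 1) x y ↔ cellRel G k x y}

/-- A connected graph `G` of rank `k` is uniform if `Dec^{k-1} G` contains no
complement-connected graph, i.e. every depth-`(k-1)` cell splits further;
every complement-connected graph (rank `0`) is uniform. -/
def Uniform (G : SimpleGraph V) : Prop :=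
  rank G = 0 ∨
    ∀ x : V, ∃ y : V, cellRel G (rank G - 1) x y ∧ ¬ cellRel G (rank G) x y

/-- A connected graph `G` of rank `k` is inclusion-free if for every
`0 ≤ i ≤ k`: (1) for any `K ∈ Dec^i G`, no two distinct connected components
of the complement of `K` are isomorphic; (2) no member of `Dec^i G` is
properly embeddable into another (embeddable implies isomorphic). -/
def InclusionFree (G : SimpleGraph V) : Prop :=
  ∀ i ≤ rank G,
    (∀ x y : V, cellRel G i x y → ¬ cellRel G (i + 1) x y →
      ¬ Nonempty (envGraph G (i + 1) x ≃g envGraph G (i + 1) y)) ∧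
    (∀ x y : V, Nonempty (envGraph G i x ↪g envGraph G i y) →
      Nonempty (envGraph G i x ≃g envGraph G i y))

/-- A graph is complement-connected if both it and its complement are
connected (in particular its vertex set is nonempty). -/
def CoConnected (G : SimpleGraph V) : Prop := G.Connected ∧ (Gᶜ).Connected

/-- A cocomponent of `G`: an inclusion-maximal complement-connected induced
subgraph of `G`, given by its vertex set `S`. -/
def IsCocomponent (G : SimpleGraph V) (S : Set V) : Prop :=
  CoConnected (G.induce S) ∧
    ∀ T : Set V, S ⊆ T → CoConnected (G.induce T) → T = S

end PaperFO

namespace PaperFO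

/-- The disjoint union of an indexed family of graphs. -/
def sigmaGraph {ι : Type} {Vv : ι → Type} (A : ∀ a : ι, SimpleGraph (Vv a)) :
    SimpleGraph (Σ a : ι, Vv a) where
  Adj p q := ∃ h : p.1 = q.1, (A q.1).Adj (h ▸ p.2) q.2
  symm := by
    refine ⟨?_⟩
    rintro ⟨a, x⟩ ⟨b, y⟩ ⟨h, hadj⟩
    cases h
    exact ⟨rfl, hadj.symm⟩
  loopless := by
    refine ⟨?_⟩
    rintro ⟨a, x⟩ ⟨h, hadj⟩
    exact (A a).irrefl hadj

/-- `Gcon A S` is the complement of the vertex-disjoint union of the graphs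
`A a` for `a ∈ S` (the graph `G_{i,S}` of the paper). -/
def Gcon {ι : Type} {Vv : ι → Type} (A : ∀ a : ι, SimpleGraph (Vv a)) (S : Set ι) :
    SimpleGraph {p : Σ a : ι, Vv a | p.1 ∈ S} :=
  ((sigmaGraph A).induce {p : Σ a : ι, Vv a | p.1 ∈ S})ᶜ

end PaperFO

namespace PaperFO

/-- A level of the recursive construction: a finite family of finite graphs
(representing the isomorphism types in `R_i`). -/
structure LevelData : Type 1 where
  ι : Type
  fι : Fintype ι
  dι : DecidableEq ι
  Vv : ι → Type
  fV : ∀ a : ι, Fintype (Vv a)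
  Gr : ∀ a : ι, SimpleGraph (Vv a)

/-- The recursively defined families `R_i` of the paper: `R_0` consists of
the four given graphs `H 0, H 1, H 2, H 3` of order `c`, and `R_{i+1}`
consists of the graphs `G_{i+1,S} = Gcon (R_i) S` for the subsets `S` of
`R_i` of size `|R_i| / 2`. -/
noncomputable def level (c : ℕ) (H : Fin 4 → SimpleGraph (Fin c)) : ℕ → LevelData
  | 0 => ⟨Fin 4, inferInstance, inferInstance, fun _ => Fin c, fun _ => inferInstance, H⟩
  | i + 1 =>
    let L := level c H i
    letI : Fintype L.ι := L.fι
    letI : DecidableEq L.ι := L.dι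
    letI : ∀ a, Fintype (L.Vv a) := L.fV
    { ι := { S : Finset L.ι // 2 * S.card = Fintype.card L.ι }
      fι := Fintype.ofFinite _
      dι := Classical.decEq _
      Vv := fun S => {p : Σ a : L.ι, L.Vv a | p.1 ∈ (S.1 : Set L.ι)}
      fV := fun S => Fintype.ofFinite _
      Gr := fun S => Gcon L.Gr (S.1 : Set L.ι) }

end PaperFO

namespace PaperFO

open Relation

variable {V : Type} {G : SimpleGraph V}

/-- generic transfer out of an RTG into a reflexive transitive relation. -/
lemma rtg_out {α : Type*} {r c : α → α → Prop} (hrefl : Reflexive c) (htrans : Transitive c)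
    (h : ∀ p q, r p q → c p q) {x y : α} (hxy : Relation.ReflTransGen r x y) : c x y := by
  induction hxy with
  | refl => exact hrefl x
  | tail _ hstep ih => exact htrans ih (h _ _ hstep)

lemma cellRel_refl (G : SimpleGraph V) (j : ℕ) : Reflexive (cellRel G j) := by
  cases j <;> exact fun x => Relation.ReflTransGen.refl

lemma cellRel_trans (G : SimpleGraph V) (j : ℕ) : Transitive (cellRel G j) := by
  cases j <;> exact fun _ _ _ h1 h2 => Relation.ReflTransGen.trans h1 h2

lemma parityAdj_symm {j : ℕ} {x y : V} (h : parityAdj G j x y) : parityAdj G j y x :=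
  ⟨h.1.symm, (G.adj_comm y x).trans h.2⟩

lemma cellRel_symm (G : SimpleGraph V) (j : ℕ) {x y : V} (h : cellRel G j x y) :
    cellRel G j y x := by
  cases j with
  | zero =>
    induction h with
    | refl => exact Relation.ReflTransGen.refl
    | tail _ hstep ih => exact Relation.ReflTransGen.head (parityAdj_symm hstep) ih
  | succ i =>
    induction h with
    | refl => exact Relation.ReflTransGen.refl
    | tail _ hstep ih =>
      exact Relation.ReflTransGen.head ⟨cellRel_symm G i hstep.1, parityAdj_symm hstep.2⟩ ih

lemma cellRel_succ_le (G : SimpleGraph V) (j : ℕ) {x y : V}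
    (h : cellRel G (j + 1) x y) : cellRel G j x y :=
  rtg_out (cellRel_refl G j) (cellRel_trans G j) (fun _ _ hpq => hpq.1) h

lemma cellRel_le_of_le (G : SimpleGraph V) {j k : ℕ} (hjk : j ≤ k) {x y : V}
    (h : cellRel G k x y) : cellRel G j x y := by
  induction hjk with
  | refl => exact h
  | step _ ih => exact ih (cellRel_succ_le G _ h)

lemma parityAdj_add_two (G : SimpleGraph V) (j : ℕ) (x y : V) :
    parityAdj G (j + 2) x y ↔ parityAdj G j x y := by
  unfold parityAdj
  simp [Nat.even_add_one, em]

/-- each vertex pair related at level `j` is joined by a chain of `parityAdj j` steps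
within the level-`j` cell. -/
lemma cellRel_self_refine (G : SimpleGraph V) (j : ℕ) {x y : V} (h : cellRel G j x y) :
    Relation.ReflTransGen (fun p q => cellRel G j p q ∧ parityAdj G j p q) x y := by
  cases j with
  | zero =>
    induction h with
    | refl => exact Relation.ReflTransGen.refl
    | tail _ hstep ih =>
      exact ih.tail ⟨Relation.ReflTransGen.single hstep, hstep⟩
  | succ i =>
    induction h with
    | refl => exact Relation.ReflTransGen.refl
    | tail _ hstep ih =>
      exact ih.tail ⟨Relation.ReflTransGen.single hstep, hstep.2⟩

def Stab (G : SimpleGraph V) (k : ℕ) : Prop :=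
  ∀ x y : V, cellRel G (k + 1) x y ↔ cellRel G k x y

lemma rank_def (G : SimpleGraph V) : rank G = sInf {k | Stab G k} := rfl

lemma Stab.succ {k : ℕ} (h : Stab G k) : Stab G (k + 1) := by
  intro x y
  constructor
  · exact fun hx => cellRel_succ_le G _ hx
  · intro hx
    have h2 : cellRel G k x y := (h x y).mp hx
    have h3 := cellRel_self_refine G k h2
    show cellRel G (k + 2) x y
    refine rtg_out (cellRel_refl G (k+2)) (cellRel_trans G (k+2)) ?_ h3
    intro p q hpq
    exact Relation.ReflTransGen.single ⟨(h p q).mpr hpq.1, (parityAdj_add_two G k p q).mpr hpq.2⟩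

lemma Stab.mono {k m : ℕ} (h : Stab G k) (hkm : k ≤ m) : Stab G m := by
  induction hkm with
  | refl => exact h
  | step _ ih => exact ih.succ

lemma rank_eq_of (k : ℕ) (h1 : Stab G k) (h2 : ∀ m < k, ¬ Stab G m) : rank G = k := by
  refine le_antisymm (Nat.sInf_le h1) (le_csInf ⟨k, h1⟩ ?_)
  intro m hm
  by_contra hlt
  exact h2 m (by omega) hm

lemma stab_rank_le {k : ℕ} (h : Stab G k) : rank G ≤ k := Nat.sInf_le h

lemma stab_of_rank {k : ℕ} (h : Stab G k) : Stab G (rank G) := by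
  have : rank G ∈ {k | Stab G k} := Nat.sInf_mem ⟨k, h⟩
  exact this

lemma cellRel_zero_iff_reachable (x y : V) : cellRel G 0 x y ↔ G.Reachable x y := by
  rw [SimpleGraph.reachable_iff_reflTransGen]
  constructor
  · refine fun h => rtg_out (fun _ => .refl) (fun _ _ _ a b => a.trans b) ?_ h
    exact fun p q hpq => Relation.ReflTransGen.single (hpq.2.mpr Even.zero)
  · refine fun h => rtg_out (fun _ => .refl) (fun _ _ _ a b => a.trans b) ?_ h
    exact fun p q hpq => Relation.ReflTransGen.single ⟨hpq.ne, by simp [hpq]⟩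

lemma cellRel_one_iff_compl_reachable (hG : G.Preconnected) (x y : V) :
    cellRel G 1 x y ↔ (Gᶜ).Reachable x y := by
  rw [SimpleGraph.reachable_iff_reflTransGen]
  constructor
  · refine fun h => rtg_out (fun _ => .refl) (fun _ _ _ a b => a.trans b) ?_ h
    intro p q hpq
    refine Relation.ReflTransGen.single ?_
    have : ¬ G.Adj p q := fun ha => by simpa [ha] using hpq.2.2
    exact ⟨hpq.2.1, this⟩
  · refine fun h => rtg_out (fun _ => .refl) (fun _ _ _ a b => a.trans b) ?_ h
    intro p q hpq
    refine Relation.ReflTransGen.single ⟨(cellRel_zero_iff_reachable p q).mpr (hG p q), hpq.ne, ?_⟩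
    simp [hpq.2, (by decide : ¬ Even 1)]

lemma coConnected_stab_zero (h : CoConnected G) : Stab G 0 := by
  intro x y
  rw [cellRel_zero_iff_reachable, cellRel_one_iff_compl_reachable h.1.preconnected]
  exact ⟨fun _ => h.1.preconnected x y, fun _ => h.2.preconnected x y⟩

lemma coConnected_rank_zero (h : CoConnected G) : rank G = 0 :=
  rank_eq_of 0 (coConnected_stab_zero h) (by omega)

end PaperFO

namespace PaperFO
lemma rtg_transfer {α β : Type*} (f : α → β) (hf : Function.Injective f)
    {s : α → α → Prop} {r : β → β → Prop}
    (h1 : ∀ u v, s u v ↔ r (f u) (f v))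
    (h2 : ∀ (u : α) (y : β), r (f u) y → ∃ v, y = f v)
    (u v : α) : Relation.ReflTransGen r (f u) (f v) ↔ Relation.ReflTransGen s u v := by
  constructor
  · intro h
    have key : ∀ y, Relation.ReflTransGen r (f u) y →
        ∃ w, y = f w ∧ Relation.ReflTransGen s u w := by
      intro y hy
      induction hy with
      | refl => exact ⟨u, rfl, .refl⟩
      | tail hxy hstep ih =>
        obtain ⟨w, rfl, hw⟩ := ih
        obtain ⟨w', rfl⟩ := h2 w _ hstep
        exact ⟨w', rfl, hw.tail ((h1 w w').mpr hstep)⟩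
    obtain ⟨w, hw, hsw⟩ := key (f v) h
    rwa [← hf hw] at hsw
  · intro h
    induction h with
    | refl => exact .refl
    | tail _ hstep ih => exact ih.tail ((h1 _ _).mp hstep)
end PaperFO

namespace PaperFO

open Relation

variable {ι : Type} {Vv : ι → Type}

/-- the canonical vertex of `Gcon A S` over `u : Vv a`. -/
def ff {S : Set ι} (a : ι) (ha : a ∈ S) (u : Vv a) : {p : Σ b : ι, Vv b | p.1 ∈ S} :=
  ⟨⟨a, u⟩, ha⟩

lemma ff_inj {S : Set ι} (a : ι) (ha : a ∈ S) : Function.Injective (ff (Vv := Vv) a ha) := by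
  intro u v h
  simpa [ff, Sigma.mk.inj_iff] using h

variable (A : ∀ a : ι, SimpleGraph (Vv a))

lemma sigma_adj_same {a : ι} (u v : Vv a) :
    (sigmaGraph A).Adj ⟨a, u⟩ ⟨a, v⟩ ↔ (A a).Adj u v := by
  constructor
  · rintro ⟨h, hadj⟩; exact hadj
  · exact fun h => ⟨rfl, h⟩

variable {S : Set ι}

lemma gcon_adj (x y : {p : Σ b : ι, Vv b | p.1 ∈ S}) :
    (Gcon A S).Adj x y ↔ x ≠ y ∧ ¬ (sigmaGraph A).Adj x.1 y.1 := Iff.rfl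

lemma gcon_adj_of_fst_ne {x y : {p : Σ b : ι, Vv b | p.1 ∈ S}} (h : x.1.1 ≠ y.1.1) :
    (Gcon A S).Adj x y := by
  rw [gcon_adj]
  exact ⟨fun he => h (by rw [he]), fun ha => h ha.1⟩

lemma gcon_adj_same {a : ι} (ha : a ∈ S) (u v : Vv a) :
    (Gcon A S).Adj (ff a ha u) (ff a ha v) ↔ u ≠ v ∧ ¬ (A a).Adj u v := by
  rw [gcon_adj]
  constructor
  · rintro ⟨h1, h2⟩
    exact ⟨fun he => h1 (by rw [he]), fun hadj => h2 ((sigma_adj_same A u v).mpr hadj)⟩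
  · rintro ⟨h1, h2⟩
    exact ⟨fun he => h1 (ff_inj a ha he), fun hadj => h2 ((sigma_adj_same A u v).mp hadj)⟩

lemma gcon_preconnected (hne : ∀ a ∈ S, Nonempty (Vv a))
    (h2 : ∀ a ∈ S, ∃ b ∈ S, b ≠ a) : (Gcon A S).Preconnected := by
  rintro ⟨⟨a, u⟩, (ha : a ∈ S)⟩ ⟨⟨b, v⟩, (hb : b ∈ S)⟩
  by_cases hab : a = b
  · subst hab
    obtain ⟨c, hc, hca⟩ := h2 a ha
    obtain ⟨w⟩ := hne c hc
    have hadj1 : (Gcon A S).Adj ⟨⟨a, u⟩, ha⟩ (ff c hc w) := gcon_adj_of_fst_ne A (Ne.symm hca)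
    have hadj2 : (Gcon A S).Adj (ff c hc w) ⟨⟨a, v⟩, hb⟩ := gcon_adj_of_fst_ne A hca
    exact (hadj1.reachable).trans hadj2.reachable
  · exact (gcon_adj_of_fst_ne A hab).reachable

lemma gcon_cell_zero (hne : ∀ a ∈ S, Nonempty (Vv a))
    (h2 : ∀ a ∈ S, ∃ b ∈ S, b ≠ a) (x y : {p : Σ b : ι, Vv b | p.1 ∈ S}) :
    cellRel (Gcon A S) 0 x y :=
  (cellRel_zero_iff_reachable x y).mpr (gcon_preconnected A hne h2 x y)

lemma gcon_parity_same {a : ι} (ha : a ∈ S) (j : ℕ) (u v : Vv a) :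
    parityAdj (Gcon A S) (j + 1) (ff a ha u) (ff a ha v) ↔ parityAdj (A a) j u v := by
  unfold parityAdj
  rw [gcon_adj_same]
  constructor
  · rintro ⟨h1, h2⟩
    have huv : u ≠ v := fun he => h1 (by rw [he])
    refine ⟨huv, ?_⟩
    have : ¬ (A a).Adj u v ↔ Even (j + 1) := by
      constructor
      · exact fun hn => h2.mp ⟨huv, hn⟩
      · exact fun he => (h2.mpr he).2
    rw [Nat.even_add_one] at this
    tauto
  · rintro ⟨h1, h2⟩
    refine ⟨fun he => h1 (ff_inj a ha he), ?_⟩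
    rw [Nat.even_add_one]
    constructor
    · rintro ⟨-, hn⟩; exact fun he => hn (h2.mpr he)
    · intro hne'
      exact ⟨h1, fun hadj => hne' (h2.mp hadj)⟩

lemma gcon_parity_fst {x y : {p : Σ b : ι, Vv b | p.1 ∈ S}}
    (h : parityAdj (Gcon A S) 1 x y) : x.1.1 = y.1.1 := by
  by_contra hne
  have := h.2.mp (gcon_adj_of_fst_ne A hne)
  simp at this

lemma gcon_cell_fst (j : ℕ) :
    ∀ x y : {p : Σ b : ι, Vv b | p.1 ∈ S},
      cellRel (Gcon A S) (j + 1) x y → x.1.1 = y.1.1 := by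
  induction j with
  | zero =>
    intro x y h
    induction h with
    | refl => rfl
    | tail _ hstep ih => exact ih.trans (gcon_parity_fst A hstep.2)
  | succ j ihj =>
    intro x y h
    induction h with
    | refl => rfl
    | tail _ hstep ih => exact ih.trans (ihj _ _ hstep.1)

lemma gcon_cell_within (hne : ∀ a ∈ S, Nonempty (Vv a))
    (h2 : ∀ a ∈ S, ∃ b ∈ S, b ≠ a) :
    ∀ (j : ℕ) (a : ι) (ha : a ∈ S) (u v : Vv a),
      cellRel (Gcon A S) (j + 1) (ff a ha u) (ff a ha v) ↔ cellRel (A a) j u v := by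
  intro j
  induction j with
  | zero =>
    intro a ha u v
    show Relation.ReflTransGen _ _ _ ↔ Relation.ReflTransGen _ _ _
    refine rtg_transfer (ff a ha) (ff_inj a ha) ?_ ?_ u v
    · intro p q
      rw [gcon_parity_same]
      exact ⟨fun h => ⟨gcon_cell_zero A hne h2 _ _, h⟩, fun h => h.2⟩
    · rintro p ⟨⟨b, w⟩, hb⟩ hr
      have : a = b := gcon_parity_fst A hr.2
      subst this
      exact ⟨w, rfl⟩
  | succ j ihj =>
    intro a ha u v
    show Relation.ReflTransGen _ _ _ ↔ Relation.ReflTransGen _ _ _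
    refine rtg_transfer (ff a ha) (ff_inj a ha) ?_ ?_ u v
    · intro p q
      rw [gcon_parity_same]
      exact and_congr (ihj a ha p q).symm Iff.rfl
    · rintro p ⟨⟨b, w⟩, hb⟩ hr
      have : a = b := gcon_cell_fst A j _ _ hr.1
      subst this
      exact ⟨w, rfl⟩

lemma gcon_not_cell_of_fst_ne {j : ℕ} {x y : {p : Σ b : ι, Vv b | p.1 ∈ S}}
    (h : x.1.1 ≠ y.1.1) : ¬ cellRel (Gcon A S) (j + 1) x y :=
  fun hc => h (gcon_cell_fst A j x y hc)

end PaperFO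

namespace PaperFO

open Relation

section EnvZero
variable {V : Type} {G : SimpleGraph V}

/-- For a preconnected graph the depth-0 environment of any vertex is the whole graph. -/
def envZeroIso (hG : G.Preconnected) (x : V) : envGraph G 0 x ≃g G where
  toEquiv := Equiv.subtypeUnivEquiv (fun u => (cellRel_zero_iff_reachable x u).mpr (hG x u))
  map_rel_iff' := by
    intro a b
    show G.Adj a.1 b.1 ↔ parityAdj G 0 a.1 b.1
    constructor
    · exact fun h => ⟨h.ne, iff_of_true h Even.zero⟩
    · exact fun h => h.2.mpr Even.zero

/-- transport embeddings along isos. -/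
lemma emb_transport {V1 V2 V3 V4 : Type} {G1 : SimpleGraph V1} {G2 : SimpleGraph V2}
    {G3 : SimpleGraph V3} {G4 : SimpleGraph V4} (e1 : G1 ≃g G3) (e2 : G2 ≃g G4) :
    Nonempty (G1 ↪g G2) → Nonempty (G3 ↪g G4) :=
  fun ⟨f⟩ => ⟨(e2.toEmbedding.comp f).comp e1.symm.toEmbedding⟩

lemma iso_transport {V1 V2 V3 V4 : Type} {G1 : SimpleGraph V1} {G2 : SimpleGraph V2}
    {G3 : SimpleGraph V3} {G4 : SimpleGraph V4} (e1 : G1 ≃g G3) (e2 : G2 ≃g G4) :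
    Nonempty (G1 ≃g G2) → Nonempty (G3 ≃g G4) :=
  fun ⟨f⟩ => ⟨(e2.comp f).comp e1.symm⟩

end EnvZero

variable {ι : Type} {Vv : ι → Type} (A : ∀ a : ι, SimpleGraph (Vv a)) {S : Set ι}

/-- The depth-`(j+1)` environment of a vertex of `Gcon A S` in the fiber of `a`
is the depth-`j` environment in `A a`. -/
noncomputable def envSuccIso (hne : ∀ a ∈ S, Nonempty (Vv a))
    (h2 : ∀ a ∈ S, ∃ b ∈ S, b ≠ a) (j : ℕ) (a : ι) (ha : a ∈ S) (u : Vv a) :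
    envGraph (Gcon A S) (j + 1) (ff a ha u) ≃g envGraph (A a) j u := by
  have hbij : Function.Bijective
      (fun v : {v : Vv a // cellRel (A a) j u v} =>
        (⟨ff a ha v.1, (gcon_cell_within A hne h2 j a ha u v.1).mpr v.2⟩ :
          {y // cellRel (Gcon A S) (j + 1) (ff a ha u) y})) := by
    constructor
    · intro p q hpq
      exact Subtype.ext (ff_inj a ha (congrArg Subtype.val hpq))
    · rintro ⟨⟨⟨b, w⟩, hb⟩, hy⟩
      have hab : a = b := gcon_cell_fst A j _ _ hy
      subst hab
      exact ⟨⟨w, (gcon_cell_within A hne h2 j a ha u w).mp hy⟩, rfl⟩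
  exact (RelIso.mk (Equiv.ofBijective _ hbij)
    (fun {p q} => gcon_parity_same A ha j p.1 q.1)).symm

variable {A}

lemma gcon_stab_succ_iff (hne : ∀ a ∈ S, Nonempty (Vv a))
    (h2 : ∀ a ∈ S, ∃ b ∈ S, b ≠ a) (k : ℕ) :
    Stab (Gcon A S) (k + 1) ↔ ∀ a ∈ S, Stab (A a) k := by
  constructor
  · intro h a ha u v
    have := h (ff a ha u) (ff a ha v)
    rwa [gcon_cell_within A hne h2 (k + 1) a ha u v,
      gcon_cell_within A hne h2 k a ha u v] at this
  · rintro h ⟨⟨a, u⟩, (ha : a ∈ S)⟩ ⟨⟨b, v⟩, (hb : b ∈ S)⟩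
    by_cases hab : a = b
    · subst hab
      show cellRel (Gcon A S) (k + 2) (ff a ha u) (ff a ha v) ↔
        cellRel (Gcon A S) (k + 1) (ff a ha u) (ff a ha v)
      rw [gcon_cell_within A hne h2 (k + 1) a ha u v,
        gcon_cell_within A hne h2 k a ha u v]
      exact h a ha u v
    · exact iff_of_false (gcon_not_cell_of_fst_ne A hab) (gcon_not_cell_of_fst_ne A hab)

end PaperFO

namespace PaperFO

open Relation

variable {ι : Type} {Vv : ι → Type} {A : ∀ a : ι, SimpleGraph (Vv a)} {S : Set ι}

lemma h2_of_pair (hS2 : ∃ a ∈ S, ∃ b ∈ S, a ≠ b) : ∀ a ∈ S, ∃ b ∈ S, b ≠ a := by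
  rintro a ha
  obtain ⟨c, hc, d, hd, hcd⟩ := hS2
  by_cases h : c = a
  · exact ⟨d, hd, fun he => hcd (h.trans he.symm)⟩
  · exact ⟨c, hc, h⟩

lemma gcon_not_stab_zero (hne : ∀ a ∈ S, Nonempty (Vv a))
    (hS2 : ∃ a ∈ S, ∃ b ∈ S, a ≠ b) : ¬ Stab (Gcon A S) 0 := by
  intro h
  have h2 := h2_of_pair hS2
  obtain ⟨a, ha, b, hb, hab⟩ := hS2
  obtain ⟨u⟩ := hne a ha
  obtain ⟨v⟩ := hne b hb
  have h0 : cellRel (Gcon A S) 0 (ff a ha u) (ff b hb v) :=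
    gcon_cell_zero A hne h2 _ _
  exact gcon_not_cell_of_fst_ne A hab ((h _ _).mpr h0)

lemma gcon_rank (hne : ∀ a ∈ S, Nonempty (Vv a)) (hS2 : ∃ a ∈ S, ∃ b ∈ S, a ≠ b)
    (i : ℕ) (hstab : ∀ a ∈ S, Stab (A a) i) (hrk : ∀ a ∈ S, rank (A a) = i) :
    rank (Gcon A S) = i + 1 := by
  have h2 := h2_of_pair hS2
  refine rank_eq_of (i + 1) ((gcon_stab_succ_iff hne h2 i).mpr hstab) ?_
  intro m hm hstabm
  have hstabi : Stab (Gcon A S) i := hstabm.mono (by omega)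
  cases i with
  | zero => exact gcon_not_stab_zero hne hS2 hstabi
  | succ k =>
    obtain ⟨a, ha, -⟩ := hS2
    have : Stab (A a) k := (gcon_stab_succ_iff hne h2 k).mp hstabi a ha
    have := stab_rank_le this
    rw [hrk a ha] at this
    omega

lemma gcon_uniform (hne : ∀ a ∈ S, Nonempty (Vv a)) (hS2 : ∃ a ∈ S, ∃ b ∈ S, a ≠ b)
    (i : ℕ) (hstab : ∀ a ∈ S, Stab (A a) i) (hrk : ∀ a ∈ S, rank (A a) = i)
    (huni : ∀ a ∈ S, Uniform (A a)) : Uniform (Gcon A S) := by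
  have h2 := h2_of_pair hS2
  right
  rw [gcon_rank hne hS2 i hstab hrk]
  simp only [Nat.add_sub_cancel]
  rintro ⟨⟨a, u⟩, (ha : a ∈ S)⟩
  cases i with
  | zero =>
    obtain ⟨b, hb, hba⟩ := h2 a ha
    obtain ⟨w⟩ := hne b hb
    exact ⟨ff b hb w, gcon_cell_zero A hne h2 _ _,
      gcon_not_cell_of_fst_ne A (Ne.symm hba)⟩
  | succ k =>
    have huna := huni a ha
    rcases huna with h0 | h0
    · rw [hrk a ha] at h0; omega
    · obtain ⟨v, hv1, hv2⟩ := h0 u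
      rw [hrk a ha] at hv1 hv2
      simp only [Nat.add_sub_cancel] at hv1
      refine ⟨ff a ha v, ?_, ?_⟩
      · exact (gcon_cell_within A hne h2 k a ha u v).mpr hv1
      · show ¬ cellRel (Gcon A S) (k + 1 + 1) (ff a ha u) (ff a ha v)
        rw [gcon_cell_within A hne h2 (k + 1) a ha u v]
        exact hv2

lemma gcon_inclusionFree (hne : ∀ a ∈ S, Nonempty (Vv a)) (hS2 : ∃ a ∈ S, ∃ b ∈ S, a ≠ b)
    (i : ℕ) (hstab : ∀ a ∈ S, Stab (A a) i) (hrk : ∀ a ∈ S, rank (A a) = i)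
    (hconn : ∀ a ∈ S, (A a).Preconnected)
    (hcond1 : ∀ a ∈ S, ∀ j ≤ i, ∀ u v : Vv a, cellRel (A a) j u v →
      ¬ cellRel (A a) (j + 1) u v →
      ¬ Nonempty (envGraph (A a) (j + 1) u ≃g envGraph (A a) (j + 1) v))
    (hjoint : ∀ a ∈ S, ∀ b ∈ S, ∀ j ≤ i, ∀ (u : Vv a) (v : Vv b),
      Nonempty (envGraph (A a) j u ↪g envGraph (A b) j v) →
      Nonempty (envGraph (A a) j u ≃g envGraph (A b) j v))
    (hnoniso : ∀ a ∈ S, ∀ b ∈ S, a ≠ b → ¬ Nonempty (A a ≃g A b)) :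
    InclusionFree (Gcon A S) := by
  have h2 := h2_of_pair hS2
  intro j hj
  rw [gcon_rank hne hS2 i hstab hrk] at hj
  constructor
  · -- condition (1)
    rintro ⟨⟨a, u⟩, (ha : a ∈ S)⟩ ⟨⟨b, v⟩, (hb : b ∈ S)⟩ hcell hncell hiso
    cases j with
    | zero =>
      by_cases hab : a = b
      · subst hab
        refine hncell ?_
        show cellRel (Gcon A S) (0 + 1) (ff a ha u) (ff a hb v)
        rw [gcon_cell_within A hne h2 0 a ha u v]
        exact (cellRel_zero_iff_reachable u v).mpr (hconn a ha u v)
      · refine hnoniso a ha b hb hab ?_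
        refine iso_transport ((envSuccIso A hne h2 0 a ha u).trans
          (envZeroIso (hconn a ha) u)) ((envSuccIso A hne h2 0 b hb v).trans
          (envZeroIso (hconn b hb) v)) hiso
    | succ k =>
      have hab : a = b := gcon_cell_fst A k _ _ hcell
      subst hab
      have hc : cellRel (A a) k u v :=
        (gcon_cell_within A hne h2 k a ha u v).mp hcell
      have hnc : ¬ cellRel (A a) (k + 1) u v := by
        intro hcc
        exact hncell ((gcon_cell_within A hne h2 (k + 1) a ha u v).mpr hcc)
      refine hcond1 a ha k (by omega) u v hc hnc ?_
      exact iso_transport (envSuccIso A hne h2 (k + 1) a ha u)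
        (envSuccIso A hne h2 (k + 1) a hb v) hiso
  · -- condition (2)
    rintro ⟨⟨a, u⟩, (ha : a ∈ S)⟩ ⟨⟨b, v⟩, (hb : b ∈ S)⟩ hemb
    cases j with
    | zero =>
      have hpc := gcon_preconnected A hne h2
      exact ⟨((envZeroIso hpc _).trans (envZeroIso hpc _).symm)⟩
    | succ k =>
      have hemb' := emb_transport (envSuccIso A hne h2 k a ha u)
        (envSuccIso A hne h2 k b hb v) hemb
      have := hjoint a ha b hb k (by omega) u v hemb'
      exact iso_transport (envSuccIso A hne h2 k a ha u).symm
        (envSuccIso A hne h2 k b hb v).symm this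

end PaperFO

namespace PaperFO

variable {ι : Type} {Vv : ι → Type} {A : ∀ a : ι, SimpleGraph (Vv a)}

lemma sigma_eta {b : ι} (p : Σ a : ι, Vv a) (h : p.1 = b) : p = ⟨b, h ▸ p.2⟩ := by
  cases p; cases h; rfl

/-- If `a ∈ S \ T` then there is no graph embedding `Gcon A S ↪g Gcon A T`. -/
lemma gcon_no_emb (hconn : ∀ a : ι, (A a).Connected)
    (hembne : ∀ a b : ι, a ≠ b → ¬ Nonempty (A a ↪g A b))
    {S T : Set ι} {a : ι} (haS : a ∈ S) (haT : a ∉ T) :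
    ¬ Nonempty (Gcon A S ↪g Gcon A T) := by
  rintro ⟨f⟩
  have hsig : ∀ x y : {p : Σ b : ι, Vv b | p.1 ∈ S}, x ≠ y →
      ((sigmaGraph A).Adj x.1 y.1 ↔ (sigmaGraph A).Adj (f x).1 (f y).1) := by
    intro x y hxy
    have hf : (Gcon A T).Adj (f x) (f y) ↔ (Gcon A S).Adj x y := f.map_rel_iff
    rw [gcon_adj, gcon_adj] at hf
    have hfxy : f x ≠ f y := fun he => hxy (f.injective he)
    constructor
    · intro h
      by_contra hT
      exact (hf.mp ⟨hfxy, hT⟩).2 h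
    · intro h
      by_contra hS'
      exact (hf.mpr ⟨hxy, hS'⟩).2 h
  obtain ⟨u0⟩ := (hconn a).nonempty
  have hstep : ∀ u v : Vv a, (A a).Adj u v →
      (f (ff a haS u)).1.1 = (f (ff a haS v)).1.1 := by
    intro u v huv
    have hx : (ff (S := S) a haS u) ≠ ff a haS v := fun he => huv.ne (ff_inj a haS he)
    exact ((hsig _ _ hx).mp ((sigma_adj_same A u v).mpr huv)).1
  have hfst : ∀ u : Vv a, (f (ff a haS u)).1.1 = (f (ff a haS u0)).1.1 := by
    intro u
    have hr : (A a).Reachable u0 u := (hconn a).preconnected u0 u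
    rw [SimpleGraph.reachable_iff_reflTransGen] at hr
    exact (rtg_out (c := fun p q : Vv a => (f (ff a haS p)).1.1 = (f (ff a haS q)).1.1)
      (fun p => rfl) (fun p q r h1 h2 => h1.trans h2) (fun p q h => hstep p q h) hr).symm
  have hbT : (f (ff a haS u0)).1.1 ∈ T := (f (ff a haS u0)).2
  set b := (f (ff a haS u0)).1.1 with hbdef
  let g : Vv a → Vv b := fun u => (hfst u) ▸ (f (ff a haS u)).1.2
  have hg : ∀ u, (f (ff a haS u)).1 = ⟨b, g u⟩ := fun u => sigma_eta _ (hfst u)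
  have hginj : Function.Injective g := by
    intro u v h
    have h1 : (f (ff a haS u)).1 = (f (ff a haS v)).1 := by rw [hg, hg, h]
    exact ff_inj a haS (f.injective (Subtype.ext h1))
  have hmap : ∀ u v, (A b).Adj (g u) (g v) ↔ (A a).Adj u v := by
    intro u v
    constructor
    · intro h
      have huv : u ≠ v := by rintro rfl; exact (A b).irrefl h
      have hσT : (sigmaGraph A).Adj (f (ff a haS u)).1 (f (ff a haS v)).1 := by
        rw [hg, hg]; exact (sigma_adj_same A _ _).mpr h
      have := (hsig _ _ (fun he => huv (ff_inj a haS he))).mpr hσT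
      exact (sigma_adj_same A u v).mp this
    · intro h
      have hx : ff (S := S) a haS u ≠ ff a haS v := fun he => h.ne (ff_inj a haS he)
      have hσT := (hsig _ _ hx).mp ((sigma_adj_same A u v).mpr h)
      rw [hg, hg] at hσT
      exact (sigma_adj_same A _ _).mp hσT
  have hne' : a ≠ b := fun he => haT (he ▸ hbT)
  exact hembne a b hne' ⟨⟨⟨g, hginj⟩, fun {u v} => hmap u v⟩⟩

end PaperFO

namespace PaperFO

lemma card_half_subsets {α : Type} [Fintype α] [DecidableEq α]
    (hdvd : 2 ∣ Fintype.card α) :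
    ∀ (inst : Fintype {S : Finset α // 2 * S.card = Fintype.card α}),
      @Fintype.card _ inst = (Fintype.card α).choose (Fintype.card α / 2) := by
  intro inst
  have e : {S : Finset α // 2 * S.card = Fintype.card α} ≃
      {S : Finset α // S.card = Fintype.card α / 2} :=
    Equiv.subtypeEquivRight (fun S => by omega)
  rw [@Fintype.card_congr _ _ inst _ e, Fintype.card_finset_len]

lemma choose_half_even {n : ℕ} (hdvd : 2 ∣ n) (h2 : 2 ≤ n) : 2 ∣ n.choose (n / 2) := by
  obtain ⟨m, rfl⟩ := hdvd
  have hm : 1 ≤ m := by omega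
  have hhalf : 2 * m / 2 = m := by omega
  rw [hhalf]
  have hp : (2 * m).choose m = (2 * m - 1).choose (m - 1) + (2 * m - 1).choose m := by
    have h1 : 2 * m = (2 * m - 1) + 1 := by omega
    have h2' : m = (m - 1) + 1 := by omega
    rw [h1, h2']
    rw [Nat.choose_succ_succ]
    congr 1 <;> congr 1 <;> omega
  have hs : (2 * m - 1).choose (m - 1) = (2 * m - 1).choose m := by
    have : m - 1 = (2 * m - 1) - m := by omega
    rw [this]
    exact Nat.choose_symm (by omega)
  omega

lemma choose_half_ge {n : ℕ} (h4 : 4 ≤ n) : 4 ≤ n.choose (n / 2) := by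
  have h1 : n.choose 1 ≤ n.choose (n / 2) := Nat.choose_le_middle 1 n
  rw [Nat.choose_one_right] at h1
  omega

end PaperFO

namespace PaperFO

/-- The induction invariant: all the graphs of the family `L` are connected,
uniform, inclusion-free (jointly) of rank `i`, pairwise non-isomorphic, and
there is an even number, at least four, of them. -/
def GoodFam (L : LevelData) (i : ℕ) : Prop :=
  (∀ a, Nonempty (L.Vv a)) ∧
  (∀ a, (L.Gr a).Connected) ∧
  (∀ a, Stab (L.Gr a) i) ∧
  (∀ a, rank (L.Gr a) = i) ∧
  (∀ a, Uniform (L.Gr a)) ∧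
  (∀ (a : L.ι) (j : ℕ), j ≤ i → ∀ u v : L.Vv a, cellRel (L.Gr a) j u v →
      ¬ cellRel (L.Gr a) (j + 1) u v →
      ¬ Nonempty (envGraph (L.Gr a) (j + 1) u ≃g envGraph (L.Gr a) (j + 1) v)) ∧
  (∀ (a b : L.ι) (j : ℕ), j ≤ i → ∀ (u : L.Vv a) (v : L.Vv b),
      Nonempty (envGraph (L.Gr a) j u ↪g envGraph (L.Gr b) j v) →
      Nonempty (envGraph (L.Gr a) j u ≃g envGraph (L.Gr b) j v)) ∧
  (∀ a b : L.ι, a ≠ b → ¬ Nonempty (L.Gr a ≃g L.Gr b)) ∧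
  2 ∣ @Fintype.card L.ι L.fι ∧
  4 ≤ @Fintype.card L.ι L.fι

lemma GoodFam.embne {L : LevelData} {i : ℕ} (h : GoodFam L i) :
    ∀ a b : L.ι, a ≠ b → ¬ Nonempty (L.Gr a ↪g L.Gr b) := by
  obtain ⟨hne, hconn, -, -, -, -, hjoint, hnoniso, -, -⟩ := h
  intro a b hab hemb
  obtain ⟨u0⟩ := hne a
  obtain ⟨v0⟩ := hne b
  have h1 : Nonempty (envGraph (L.Gr a) 0 u0 ↪g envGraph (L.Gr b) 0 v0) :=
    emb_transport (envZeroIso (hconn a).preconnected u0).symm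
      (envZeroIso (hconn b).preconnected v0).symm hemb
  have h2 := hjoint a b 0 (Nat.zero_le i) u0 v0 h1
  exact hnoniso a b hab (iso_transport (envZeroIso (hconn a).preconnected u0)
    (envZeroIso (hconn b).preconnected v0) h2)

lemma good_base (c : ℕ) (hc : 1 ≤ c) (H : Fin 4 → SimpleGraph (Fin c))
    (hcc : ∀ l : Fin 4, CoConnected (H l))
    (hemb : ∀ l l' : Fin 4, l ≠ l' → ¬ Nonempty (H l ↪g H l')) :
    GoodFam (level c H 0) 0 := by
  refine ⟨fun a => ⟨⟨0, hc⟩⟩, fun a => (hcc a).1, fun a => coConnected_stab_zero (hcc a),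
    fun a => coConnected_rank_zero (hcc a), fun a => Or.inl (coConnected_rank_zero (hcc a)),
    ?_, ?_, ?_, ?_, ?_⟩
  · intro a j hj u v hc1 hc2
    exfalso
    obtain rfl : j = 0 := Nat.le_zero.mp hj
    refine hc2 ((coConnected_stab_zero (hcc a) u v).mpr ?_)
    exact (cellRel_zero_iff_reachable u v).mpr ((hcc a).1.preconnected u v)
  · intro a b j hj u v hembuv
    obtain rfl : j = 0 := Nat.le_zero.mp hj
    by_cases hab : a = b
    · subst hab
      exact ⟨(envZeroIso (hcc a).1.preconnected u).trans
        (envZeroIso (hcc a).1.preconnected v).symm⟩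
    · exfalso
      refine hemb a b hab ?_
      exact emb_transport (envZeroIso (hcc a).1.preconnected u)
        (envZeroIso (hcc b).1.preconnected v) hembuv
  · intro a b hab ⟨e⟩
    exact hemb a b hab ⟨e.toEmbedding⟩
  · exact ⟨2, rfl⟩
  · exact le_of_eq rfl

end PaperFO

namespace PaperFO

lemma good_step (c : ℕ) (H : Fin 4 → SimpleGraph (Fin c)) (i : ℕ)
    (gf : GoodFam (level c H i) i) : GoodFam (level c H (i + 1)) (i + 1) := by
  have hembne := gf.embne
  obtain ⟨hne, hconn, hstab, hrk, huni, hcond1, hjoint, hnoniso, hdvd, h4⟩ := gf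
  set L := level c H i with hL
  letI : Fintype L.ι := L.fι
  letI : DecidableEq L.ι := L.dι
  have hcard : ∀ SS : {S : Finset L.ι // 2 * S.card = Fintype.card L.ι},
      2 ≤ SS.1.card := by
    intro SS
    have h2 := SS.2
    have : (4 : ℕ) ≤ Fintype.card L.ι := h4
    omega
  have hS2 : ∀ SS : {S : Finset L.ι // 2 * S.card = Fintype.card L.ι},
      ∃ a ∈ (↑SS.1 : Set L.ι), ∃ b ∈ (↑SS.1 : Set L.ι), a ≠ b := by
    intro SS
    obtain ⟨a, ha, b, hb, hab⟩ := Finset.one_lt_card.mp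
      (lt_of_lt_of_le one_lt_two (hcard SS))
    exact ⟨a, Finset.mem_coe.mpr ha, b, Finset.mem_coe.mpr hb, hab⟩
  have hne' : ∀ (SS : {S : Finset L.ι // 2 * S.card = Fintype.card L.ι}),
      ∀ a ∈ (↑SS.1 : Set L.ι), Nonempty (L.Vv a) := fun _ a _ => hne a
  have hnev : ∀ SS : {S : Finset L.ι // 2 * S.card = Fintype.card L.ι},
      Nonempty {p : Σ a : L.ι, L.Vv a | p.1 ∈ (↑SS.1 : Set L.ι)} := by
    intro SS
    obtain ⟨a, ha, -⟩ := hS2 SS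
    obtain ⟨u⟩ := hne a
    exact ⟨⟨⟨a, u⟩, ha⟩⟩
  have hrank' : ∀ SS : {S : Finset L.ι // 2 * S.card = Fintype.card L.ι},
      rank (Gcon L.Gr (↑SS.1 : Set L.ι)) = i + 1 := fun SS =>
    gcon_rank (hne' SS) (hS2 SS) i (fun a _ => hstab a) (fun a _ => hrk a)
  have hIF : ∀ SS : {S : Finset L.ι // 2 * S.card = Fintype.card L.ι},
      InclusionFree (Gcon L.Gr (↑SS.1 : Set L.ι)) := fun SS =>
    gcon_inclusionFree (hne' SS) (hS2 SS) i (fun a _ => hstab a) (fun a _ => hrk a)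
      (fun a _ => (hconn a).preconnected) (fun a _ => hcond1 a) (fun a _ b _ => hjoint a b)
      (fun a _ b _ => hnoniso a b)
  -- no-embedding for distinct indices
  have hnoemb : ∀ SS TT : {S : Finset L.ι // 2 * S.card = Fintype.card L.ι}, SS ≠ TT →
      ¬ Nonempty (Gcon L.Gr (↑SS.1 : Set L.ι) ↪g Gcon L.Gr (↑TT.1 : Set L.ι)) := by
    intro SS TT hST hGemb
    have hcards : TT.1.card ≤ SS.1.card := by
      have h1 := SS.2; have h2 := TT.2; omega
    have hsub : ¬ SS.1 ⊆ TT.1 := by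
      intro hsub
      exact hST (Subtype.ext (Finset.eq_of_subset_of_card_le hsub hcards))
    obtain ⟨a, haS, haT⟩ := Finset.not_subset.mp hsub
    exact gcon_no_emb hconn hembne (Finset.mem_coe.mpr haS)
      (fun hmem => haT (Finset.mem_coe.mp hmem)) hGemb
  refine ⟨?_, ?_, ?_, ?_, ?_, ?_, ?_, ?_, ?_, ?_⟩
  · exact hnev
  · intro SS
    exact @SimpleGraph.Connected.mk _ _
      (gcon_preconnected L.Gr (hne' SS) (h2_of_pair (hS2 SS))) (hnev SS)
  · intro SS
    exact (gcon_stab_succ_iff (hne' SS) (h2_of_pair (hS2 SS)) i).mpr (fun a _ => hstab a)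
  · exact hrank'
  · intro SS
    exact gcon_uniform (hne' SS) (hS2 SS) i (fun a _ => hstab a) (fun a _ => hrk a)
      (fun a _ => huni a)
  · -- condition (1) at each depth j ≤ i+1
    intro SS j hj u v h1 h2
    exact ((hIF SS) j (by rw [hrank' SS]; exact hj)).1 u v h1 h2
  · -- joint inclusion-freeness of the new family
    rintro SS TT j hj ⟨⟨a, u'⟩, ha⟩ ⟨⟨b, v'⟩, hb⟩ hembuv
    have pcS : (Gcon L.Gr (↑SS.1 : Set L.ι)).Preconnected :=
      gcon_preconnected L.Gr (hne' SS) (h2_of_pair (hS2 SS))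
    have pcT : (Gcon L.Gr (↑TT.1 : Set L.ι)).Preconnected :=
      gcon_preconnected L.Gr (hne' TT) (h2_of_pair (hS2 TT))
    cases j with
    | zero =>
      by_cases hST : SS = TT
      · subst hST
        exact ⟨(envZeroIso pcS _).trans (envZeroIso pcS _).symm⟩
      · exfalso
        exact hnoemb SS TT hST (emb_transport (envZeroIso pcS _) (envZeroIso pcT _) hembuv)
    | succ k =>
      have hemb2 : Nonempty (envGraph (L.Gr a) k u' ↪g envGraph (L.Gr b) k v') :=
        emb_transport (envSuccIso L.Gr (hne' SS) (h2_of_pair (hS2 SS)) k a ha u')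
          (envSuccIso L.Gr (hne' TT) (h2_of_pair (hS2 TT)) k b hb v') hembuv
      have hiso2 := hjoint a b k (by omega) u' v' hemb2
      exact iso_transport (envSuccIso L.Gr (hne' SS) (h2_of_pair (hS2 SS)) k a ha u').symm
        (envSuccIso L.Gr (hne' TT) (h2_of_pair (hS2 TT)) k b hb v').symm hiso2
  · -- pairwise non-isomorphic
    rintro SS TT hST ⟨e⟩
    exact hnoemb SS TT hST ⟨e.toEmbedding⟩
  all_goals {
    have hkey : @Fintype.card (level c H (i + 1)).ι (level c H (i + 1)).fι =
        (Fintype.card L.ι).choose (Fintype.card L.ι / 2) :=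
      card_half_subsets hdvd _
    rw [hkey]
    first
      | exact choose_half_even hdvd (by omega)
      | exact choose_half_ge h4 }

end PaperFO


namespace PaperFO

theorem statement_8 (c : ℕ) (hc : 1 ≤ c) (H : Fin 4 → SimpleGraph (Fin c))
    (hcc : ∀ l : Fin 4, CoConnected (H l))
    (hemb : ∀ l l' : Fin 4, l ≠ l' → ¬ Nonempty (H l ↪g H l'))
    (i : ℕ) :
    (∀ S : Finset (level c H i).ι, 2 ≤ S.card →
      (Gcon (level c H i).Gr (S : Set (level c H i).ι)).Connected ∧
        InclusionFree (Gcon (level c H i).Gr (S : Set (level c H i).ι)) ∧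
        Uniform (Gcon (level c H i).Gr (S : Set (level c H i).ι)) ∧
        rank (Gcon (level c H i).Gr (S : Set (level c H i).ι)) = i + 1) ∧
    (∀ S T : Finset (level c H i).ι, S.Nonempty → T.Nonempty → ¬ S ⊆ T →
      ¬ Nonempty (Gcon (level c H i).Gr (S : Set (level c H i).ι) ↪g
        Gcon (level c H i).Gr (T : Set (level c H i).ι))) ∧
    (∀ S T : (level c H (i + 1)).ι, S ≠ T →
      ¬ Nonempty ((level c H (i + 1)).Gr S ≃g (level c H (i + 1)).Gr T)) ∧
    @Fintype.card (level c H (i + 1)).ι (level c H (i + 1)).fι =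
      Nat.choose (@Fintype.card (level c H i).ι (level c H i).fι)
        (@Fintype.card (level c H i).ι (level c H i).fι / 2) := by
  have good : ∀ k, GoodFam (level c H k) k := by
    intro k
    induction k with
    | zero => exact good_base c hc H hcc hemb
    | succ k ih => exact good_step c H k ih
  have hembne := (good i).embne
  obtain ⟨hne, hconn, hstab, hrk, huni, hcond1, hjoint, hnoniso, hdvd, h4⟩ := good i
  set L := level c H i with hL
  letI : Fintype L.ι := L.fι
  letI : DecidableEq L.ι := L.dι
  refine ⟨?_, ?_, ?_, ?_⟩
  · -- part 1
    intro S hS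
    have hS2 : ∃ a ∈ (↑S : Set L.ι), ∃ b ∈ (↑S : Set L.ι), a ≠ b := by
      have h1 : 1 < S.card := by omega
      obtain ⟨a, ha, b, hb, hab⟩ := Finset.one_lt_card.mp h1
      exact ⟨a, Finset.mem_coe.mpr ha, b, Finset.mem_coe.mpr hb, hab⟩
    have hne' : ∀ a ∈ (↑S : Set L.ι), Nonempty (L.Vv a) := fun a _ => hne a
    have hnev : Nonempty {p : Σ a : L.ι, L.Vv a | p.1 ∈ (↑S : Set L.ι)} := by
      obtain ⟨a, ha, -⟩ := hS2
      obtain ⟨u⟩ := hne a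
      exact ⟨⟨⟨a, u⟩, ha⟩⟩
    refine ⟨@SimpleGraph.Connected.mk _ _
        (gcon_preconnected L.Gr hne' (h2_of_pair hS2)) hnev, ?_, ?_, ?_⟩
    · exact gcon_inclusionFree hne' hS2 i (fun a _ => hstab a) (fun a _ => hrk a)
        (fun a _ => (hconn a).preconnected) (fun a _ => hcond1 a)
        (fun a _ b _ => hjoint a b) (fun a _ b _ => hnoniso a b)
    · exact gcon_uniform hne' hS2 i (fun a _ => hstab a) (fun a _ => hrk a)
        (fun a _ => huni a)
    · exact gcon_rank hne' hS2 i (fun a _ => hstab a) (fun a _ => hrk a)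
  · -- part 2
    intro S T _ _ hsub
    obtain ⟨a, haS, haT⟩ := Finset.not_subset.mp hsub
    exact gcon_no_emb hconn hembne (Finset.mem_coe.mpr haS)
      (fun hmem => haT (Finset.mem_coe.mp hmem))
  · -- part 3
    have key : ∀ SS TT : {S : Finset L.ι // 2 * S.card = Fintype.card L.ι}, SS ≠ TT →
        ¬ Nonempty (Gcon L.Gr (↑SS.1 : Set L.ι) ≃g Gcon L.Gr (↑TT.1 : Set L.ι)) := by
      rintro SS TT hST ⟨e⟩
      have hcards : TT.1.card ≤ SS.1.card := by
        have h1 := SS.2; have h2 := TT.2; omega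
      have hsub : ¬ SS.1 ⊆ TT.1 := by
        intro hsub
        exact hST (Subtype.ext (Finset.eq_of_subset_of_card_le hsub hcards))
      obtain ⟨a, haS, haT⟩ := Finset.not_subset.mp hsub
      exact gcon_no_emb hconn hembne (Finset.mem_coe.mpr haS)
        (fun hmem => haT (Finset.mem_coe.mp hmem)) ⟨e.toEmbedding⟩
    exact key
  · -- part 4
    exact card_half_subsets hdvd (level c H (i + 1)).fι


end PaperFO
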